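/- Let Λ be a real vector space and S : (ℕ → Λ) → Λ an ℝ-linear map satisfying the unit and associativity axioms of an algebra over the coperad ℝ[X]. If V is a linear subspace of Λ that is stable under ε (i.e. ε(V) ⊆ V) and such that ε : V → V is surjective (every v ∈ V is ε(w) for some w ∈ V), then V = 0. -/
import Mathlib


/-- If `(Λ, S)` is an algebra over the coperad `ℝ[X]`
(`S` is ℝ-linear and satisfies the unit and associativity axioms),
`ε a = S (0, a, 0, 0, …)`, and `V` is a subspace of `Λ` stable under `ε`
on which `ε` is surjective, then `V = 0`. -/
theorem eps_surjective_on_stable_submodule_implies_trivial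
    (Λ : Type*) [AddCommGroup Λ] [Module ℝ Λ]
    (S : (ℕ → Λ) →ₗ[ℝ] Λ)
    (hunit : ∀ a : Λ, S (fun n => if n = 0 then a else 0) = a)
    (hassoc : ∀ a : ℕ → ℕ → Λ,
      S (fun i => S (a i)) = S (fun n => ∑ p ∈ Finset.range (n + 1), a p (n - p)))
    (ε : Λ → Λ) (hε : ∀ x : Λ, ε x = S (fun n => if n = 1 then x else 0))
    (V : Submodule ℝ Λ)
    (hstab : ∀ v ∈ V, ε v ∈ V)
    (hsurj : ∀ v ∈ V, ∃ w ∈ V, ε w = v) :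
    V = ⊥ := by
  have key : ∀ v ∈ V, ε v = 0 := by
    intro v hv
    have hchain : ∀ x : V, ∃ y : V, ε (y : Λ) = (x : Λ) := by
      intro x
      obtain ⟨u, hu, huu⟩ := hsurj x x.2
      exact ⟨⟨u, hu⟩, huu⟩
    choose g hg using hchain
    set w : ℕ → V := fun n => g^[n] ⟨v, hv⟩ with hwdef
    have hw0 : (w 0 : Λ) = v := rfl
    have hwsucc : ∀ n, ε (w (n + 1) : Λ) = (w n : Λ) := by
      intro n
      have h : w (n + 1) = g (w n) := Function.iterate_succ_apply' g n _
      rw [h, hg]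
    set a : ℕ → ℕ → Λ := fun p q => if q = 1 then (w p : Λ) else 0 with ha
    have h1 : S (fun i => S (a i))
        = S (fun n => ∑ p ∈ Finset.range (n + 1), a p (n - p)) := hassoc a
    have hL : (fun i => S (a i)) = fun i => ε (w i : Λ) := by
      funext i
      rw [hε]
    have hR : (fun n => ∑ p ∈ Finset.range (n + 1), a p (n - p))
        = fun n => if n = 0 then 0 else (w (n - 1) : Λ) := by
      funext n
      cases n with
      | zero => simp [ha]
      | succ m =>
        rw [Finset.sum_eq_single m]
        · simp [ha]
        · intro p hp hpm
          have hp' := Finset.mem_range.mp hp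
          have : m + 1 - p ≠ 1 := by omega
          simp [ha, this]
        · intro h
          exfalso
          exact h (Finset.mem_range.mpr (by omega))
    have hsplit : (fun i => ε (w i : Λ))
        = (fun n => if n = 0 then 0 else (w (n - 1) : Λ))
          + (fun n => if n = 0 then ε v else 0) := by
      funext n
      cases n with
      | zero => simp [hw0]
      | succ m => simp [hwsucc m]
    rw [hL, hR, hsplit, map_add, hunit] at h1
    -- h1 : S f + ε v = S f
    have := add_left_cancel (a := S (fun n => if n = 0 then 0 else (w (n - 1) : Λ)))
      (b := ε v) (c := 0) (by rw [add_zero]; exact h1)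
    exact this
  rw [Submodule.eq_bot_iff]
  intro v hv
  obtain ⟨u, hu, huv⟩ := hsurj v hv
  rw [← huv, key u hu]
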